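/- Let C be a convex subset of a topological real vector space X. Then the face relative interior fri C = {x ∈ C : C ⊆ closure(F_min(x,C))} is a convex set. -/

import Mathlib

open Pointwise

/-- A face of a convex set `C`: a convex subset `F ⊆ C` such that whenever a point of `F`
lies in the open segment between two points of `C`, both endpoints belong to `F`. -/
def IsFace {X : Type*} [AddCommGroup X] [Module ℝ X] (C F : Set X) : Prop :=
  F ⊆ C ∧ Convex ℝ F ∧
    ∀ x ∈ F, ∀ y ∈ C, ∀ z ∈ C, x ∈ openSegment ℝ y z → y ∈ F ∧ z ∈ F

/-- The minimal face of `C` containing `x`: the intersection of all faces containing `x`. -/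
def minFace {X : Type*} [AddCommGroup X] [Module ℝ X] (C : Set X) (x : X) : Set X :=
  ⋂₀ {F | IsFace C F ∧ x ∈ F}

/-- The conic hull of a set. -/
def coneHull {X : Type*} [AddCommGroup X] [Module ℝ X] (S : Set X) : Set X :=
  {w | ∃ (a : ℝ) (s : X), 0 ≤ a ∧ s ∈ S ∧ w = a • s}

/-- The intrinsic core of a convex set. -/
def icr {X : Type*} [AddCommGroup X] [Module ℝ X] (C : Set X) : Set X :=
  {x ∈ C | ∀ y ∈ C, ∃ z ∈ C, x ∈ openSegment ℝ y z}

/-- The face relative interior of a convex set in a topological vector space. -/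
def fri {X : Type*} [AddCommGroup X] [Module ℝ X] [TopologicalSpace X] (C : Set X) : Set X :=
  {x ∈ C | C ⊆ closure (minFace C x)}

lemma isFace_self {X : Type*} [AddCommGroup X] [Module ℝ X] {C : Set X} (hC : Convex ℝ C) :
    IsFace C C :=
  ⟨subset_rfl, hC, fun _ _ y hy z hz _ => ⟨hy, hz⟩⟩

lemma mem_minFace_self {X : Type*} [AddCommGroup X] [Module ℝ X] {C : Set X} {x : X} :
    x ∈ minFace C x := fun _ hF => hF.2

lemma minFace_subset {X : Type*} [AddCommGroup X] [Module ℝ X] {C F : Set X} {x : X}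
    (hF : IsFace C F) (hx : x ∈ F) : minFace C x ⊆ F :=
  Set.sInter_subset_of_mem ⟨hF, hx⟩

lemma isFace_minFace {X : Type*} [AddCommGroup X] [Module ℝ X] {C : Set X} (hC : Convex ℝ C)
    {x : X} (hx : x ∈ C) : IsFace C (minFace C x) := by
  refine ⟨?_, ?_, ?_⟩
  · exact (Set.sInter_subset_of_mem ⟨isFace_self hC, hx⟩)
  · exact convex_sInter fun F hF => hF.1.2.1
  · intro w hw y hy z hz hseg
    constructor <;> intro F hF
    · exact (hF.1.2.2 w (hw F hF) y hy z hz hseg).1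
    · exact (hF.1.2.2 w (hw F hF) y hy z hz hseg).2

/-- the face relative interior of a convex set is convex. -/
theorem fri_convex {X : Type*} [AddCommGroup X] [Module ℝ X] [TopologicalSpace X]
    [IsTopologicalAddGroup X] [ContinuousSMul ℝ X]
    (C : Set X) (hC : Convex ℝ C) : Convex ℝ (fri C) := by
  intro x hx y hy a b ha hb hab
  rcases eq_or_lt_of_le ha with rfl | ha'
  · simpa [show b = 1 by linarith] using hy
  rcases eq_or_lt_of_le hb with rfl | hb'
  · simpa [show a = 1 by linarith] using hx
  set w := a • x + b • y with hw
  have hwC : w ∈ C := hC hx.1 hy.1 ha hb hab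
  have hface := isFace_minFace hC hwC
  have hseg : w ∈ openSegment ℝ x y := ⟨a, b, ha', hb', hab, rfl⟩
  have hx' : x ∈ minFace C w :=
    (hface.2.2 w mem_minFace_self x hx.1 y hy.1 hseg).1
  refine ⟨hwC, fun c hc => ?_⟩
  exact closure_mono (minFace_subset hface hx') (hx.2 hc)
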